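/- arXiv:2005.06029 — 2 statements merged into one kernel-verified Lean document; each statement's English description precedes it below -/
import Mathlib

section
/- Let n ≥ 1. Suppose v, f : ℝ^n×(0,∞) → [0,∞) are nonnegative locally integrable functions with (∂_t − Δ)v ≥ f in the sense of distributions on ℝ^n×(0,∞). Let φ ∈ C_c^∞(B₁(0)) and ψ ∈ C_c^∞((−1,1)) be nonnegative with φ = 1 on B_{1/2}(0), ψ = 1 on [0,1/2), and φ, ψ ≤ 1, and let β > 2. Then there exists a constant C > 0 (independent of R and t₀) such that for all R > 1 and t₀ > 0, setting φ_R(x) := φ(x/R)^β, ψ_R(t) := ψ((t−t₀)/R²)^β, and Q_R := (B_R(0)×(t₀, t₀+R²)) \ (B_{R/2}(0)×(t₀, t₀+R²/2)), one has ∫_{t₀}^∞ ∫_{ℝ^n} f·φ_R·ψ_R dx dt ≤ (C/R²)·∬_{Q_R} v·(φ_R ψ_R)^{(β−2)/β} dx dt. -/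
open MeasureTheory Real Set
open scoped ENNReal

/-- Spatial Laplacian of `φ : ℝ^n × ℝ → ℝ`, computed as the sum of the second derivatives
along the coordinate directions. -/
noncomputable def lapSpace (n : ℕ) (φ : EuclideanSpace ℝ (Fin n) × ℝ → ℝ)
    (x : EuclideanSpace ℝ (Fin n)) (t : ℝ) : ℝ :=
  ∑ i : Fin n,
    deriv (fun s : ℝ =>
      deriv (fun r : ℝ => φ (x + r • EuclideanSpace.single i (1 : ℝ), t)) s) 0

/-- The adjoint heat operator `-∂_t φ - Δφ` applied to a function on `ℝ^n × ℝ`. -/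
noncomputable def heatAdjoint (n : ℕ) (φ : EuclideanSpace ℝ (Fin n) × ℝ → ℝ)
    (q : EuclideanSpace ℝ (Fin n) × ℝ) : ℝ :=
  -(deriv (fun s : ℝ => φ (q.1, s)) q.2) - lapSpace n φ q.1 q.2

/-- A smooth compactly supported test function on `ℝ^n × (0,∞)`. -/
def IsTestOn (n : ℕ) (φ : EuclideanSpace ℝ (Fin n) × ℝ → ℝ) : Prop :=
  ContDiff ℝ (⊤ : ℕ∞) φ ∧ HasCompactSupport φ ∧
    tsupport φ ⊆ {q : EuclideanSpace ℝ (Fin n) × ℝ | 0 < q.2}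

/-- `(∂_t - Δ) v ≥ h` in the sense of distributions on `ℝ^n × (0,∞)`. -/
def DistribHeatGe (n : ℕ) (v h : EuclideanSpace ℝ (Fin n) → ℝ → ℝ) : Prop :=
  ∀ φ : EuclideanSpace ℝ (Fin n) × ℝ → ℝ, IsTestOn n φ → (∀ q, 0 ≤ φ q) →
    ∫ q in {q : EuclideanSpace ℝ (Fin n) × ℝ | 0 < q.2}, h q.1 q.2 * φ q ≤
    ∫ q in {q : EuclideanSpace ℝ (Fin n) × ℝ | 0 < q.2}, v q.1 q.2 * heatAdjoint n φ q

/-- `(∂_t - Δ) v = h` in the sense of distributions on `ℝ^n × (0,∞)`. -/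
def DistribHeatEq (n : ℕ) (v h : EuclideanSpace ℝ (Fin n) → ℝ → ℝ) : Prop :=
  ∀ φ : EuclideanSpace ℝ (Fin n) × ℝ → ℝ, IsTestOn n φ →
    ∫ q in {q : EuclideanSpace ℝ (Fin n) × ℝ | 0 < q.2}, v q.1 q.2 * heatAdjoint n φ q =
    ∫ q in {q : EuclideanSpace ℝ (Fin n) × ℝ | 0 < q.2}, h q.1 q.2 * φ q

set_option maxHeartbeats 1000000


lemma mono_expNegInvGlue : Monotone expNegInvGlue := by
  intro a b hab
  rcases le_or_gt a 0 with ha | ha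
  · rw [expNegInvGlue.zero_of_nonpos ha]; exact expNegInvGlue.nonneg b
  · have hb : 0 < b := lt_of_lt_of_le ha hab
    unfold expNegInvGlue
    rw [if_neg (not_le.2 ha), if_neg (not_le.2 hb)]
    apply Real.exp_le_exp.2
    have : b⁻¹ ≤ a⁻¹ := by
      apply inv_anti₀ ha hab
    linarith

lemma mono_smoothTransition : Monotone Real.smoothTransition := by
  intro a b hab
  unfold Real.smoothTransition
  rw [div_le_div_iff₀ (Real.smoothTransition.pos_denom a) (Real.smoothTransition.pos_denom b)]
  have h1 : expNegInvGlue a ≤ expNegInvGlue b := mono_expNegInvGlue hab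
  have h2 : expNegInvGlue (1 - b) ≤ expNegInvGlue (1 - a) := mono_expNegInvGlue (by linarith)
  nlinarith [expNegInvGlue.nonneg a, expNegInvGlue.nonneg b,
    expNegInvGlue.nonneg (1 - a), expNegInvGlue.nonneg (1 - b),
    mul_le_mul h1 h2 (expNegInvGlue.nonneg _) (expNegInvGlue.nonneg b)]

lemma deriv_nonneg_of_monotone {f : ℝ → ℝ} (hf : Monotone f) (x : ℝ) : 0 ≤ deriv f x := by
  by_cases hd : DifferentiableAt ℝ f x
  · have h := hd.hasDerivAt
    rw [hasDerivAt_iff_tendsto_slope] at h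
    refine ge_of_tendsto h ?_
    filter_upwards [self_mem_nhdsWithin] with y hy
    have hy' : y ≠ x := hy
    rw [slope_def_field]
    rcases lt_or_gt_of_ne hy' with h' | h'
    · apply div_nonneg_of_nonpos
      · simpa using hf h'.le
      · linarith
    · apply div_nonneg
      · simpa using hf h'.le
      · linarith
  · rw [deriv_zero_of_not_differentiableAt hd]

lemma deriv_smoothTransition_nonneg (s : ℝ) : 0 ≤ deriv Real.smoothTransition s :=
  deriv_nonneg_of_monotone mono_smoothTransition s

lemma deriv_smoothTransition_nonpos_zero {s : ℝ} (hs : s ≤ 0) :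
    deriv Real.smoothTransition s = 0 := by
  rcases lt_or_eq_of_le hs with h | h
  · have : Real.smoothTransition =ᶠ[nhds s] (fun _ => (0:ℝ)) := by
      filter_upwards [Iio_mem_nhds h] with z hz
      exact Real.smoothTransition.zero_of_nonpos (le_of_lt hz)
    rw [this.deriv_eq, deriv_const]
  · subst h
    have hmin : IsLocalMin Real.smoothTransition 0 := by
      apply Filter.Eventually.of_forall
      intro y
      rw [Real.smoothTransition.zero]
      exact Real.smoothTransition.nonneg y
    exact hmin.deriv_eq_zero

lemma pow_le_rpow_of_le_one {a : ℝ} (h0 : 0 ≤ a) (h1 : a ≤ 1) {j : ℕ} {c : ℝ}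
    (hc : 0 ≤ c) (hcj : c ≤ (j:ℝ)) : a ^ j ≤ a ^ c := by
  rw [← Real.rpow_natCast a j]
  exact Real.rpow_le_rpow_of_exponent_ge' h0 h1 hc hcj

lemma rpow_le_pow_of_le_one {a : ℝ} (h0 : 0 ≤ a) (h1 : a ≤ 1) {j : ℕ} {c : ℝ}
    (hcj : (j:ℝ) ≤ c) : a ^ c ≤ a ^ j := by
  rw [← Real.rpow_natCast a j]
  exact Real.rpow_le_rpow_of_exponent_ge' h0 h1 (Nat.cast_nonneg j) hcj

lemma W_eq_rpow {a b β : ℝ} (ha : 0 ≤ a) (hb : 0 ≤ b) (hβ : 2 < β) :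
    (a ^ β * b ^ β) ^ ((β - 2)/β) = a ^ (β - 2) * b ^ (β - 2) := by
  have hβ0 : β ≠ 0 := by linarith
  rw [← Real.mul_rpow ha hb, ← Real.rpow_mul (mul_nonneg ha hb)]
  rw [show β * ((β - 2)/β) = β - 2 by field_simp]
  exact Real.mul_rpow ha hb

noncomputable def Pd (n : ℕ) (φ : EuclideanSpace ℝ (Fin n) → ℝ) (i : Fin n)
    (z : EuclideanSpace ℝ (Fin n)) : ℝ :=
  fderiv ℝ φ z (EuclideanSpace.single i 1)

noncomputable def Qd (n : ℕ) (φ : EuclideanSpace ℝ (Fin n) → ℝ) (i : Fin n)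
    (z : EuclideanSpace ℝ (Fin n)) : ℝ :=
  fderiv ℝ (Pd n φ i) z (EuclideanSpace.single i 1)

lemma contDiff_Pd {n : ℕ} {φ : EuclideanSpace ℝ (Fin n) → ℝ}
    (hφ : ContDiff ℝ (⊤ : ℕ∞) φ) (i : Fin n) : ContDiff ℝ (⊤ : ℕ∞) (Pd n φ i) := by
  have h := hφ.fderiv_right (m := (⊤ : ℕ∞)) (by exact_mod_cast le_top)
  exact (ContinuousLinearMap.apply ℝ ℝ (EuclideanSpace.single i 1)).contDiff.comp h

lemma hasDerivAt_line {n : ℕ} {φ : EuclideanSpace ℝ (Fin n) → ℝ} (hφ : Differentiable ℝ φ)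
    (y v : EuclideanSpace ℝ (Fin n)) (c s : ℝ) :
    HasDerivAt (fun r : ℝ => φ (y + (c * r) • v)) (c * fderiv ℝ φ (y + (c * s) • v) v) s := by
  have h1 : HasDerivAt (fun r : ℝ => c * r) c s := by
    simpa using (hasDerivAt_id s).const_mul c
  have hline : HasDerivAt (fun r : ℝ => y + (c * r) • v) (c • v) s := by
    simpa using (h1.smul_const v).const_add y
  have h2 := ((hφ (y + (c * s) • v)).hasFDerivAt).comp_hasDerivAt s hline
  simpa [Function.comp_def, _root_.map_smul, smul_eq_mul, mul_comm] using h2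

lemma heatAdjoint_eq (n : ℕ) {φ : EuclideanSpace ℝ (Fin n) → ℝ} (hφ : ContDiff ℝ (⊤ : ℕ∞) φ)
    {Θ Θ' : ℝ → ℝ} (hΘ : ∀ t, HasDerivAt Θ (Θ' t) t) (R : ℝ) (m : ℕ) (hm : 2 ≤ m)
    (q : EuclideanSpace ℝ (Fin n) × ℝ) :
    heatAdjoint n (fun p => φ (R⁻¹ • p.1) ^ m * Θ p.2) q =
      -(φ (R⁻¹ • q.1) ^ m * Θ' q.2) -
        Θ q.2 * ((m : ℝ) * (R⁻¹ * R⁻¹) *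
          ((((m : ℝ) - 1) * φ (R⁻¹ • q.1) ^ (m - 2) * (∑ i, (Pd n φ i (R⁻¹ • q.1)) ^ 2))
            + φ (R⁻¹ • q.1) ^ (m - 1) * (∑ i, Qd n φ i (R⁻¹ • q.1)))) := by
  obtain ⟨x, t⟩ := q
  have hφd : Differentiable ℝ φ := hφ.differentiable (by simp)
  set y := R⁻¹ • x with hy
  -- time derivative
  have htime : deriv (fun s : ℝ => φ (R⁻¹ • x) ^ m * Θ s) t = φ (R⁻¹ • x) ^ m * Θ' t :=
    ((hΘ t).const_mul _).deriv
  -- space second derivatives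
  have hspace : lapSpace n (fun p => φ (R⁻¹ • p.1) ^ m * Θ p.2) x t =
      Θ t * ((m : ℝ) * (R⁻¹ * R⁻¹) *
        ((((m : ℝ) - 1) * φ y ^ (m - 2) * (∑ i, (Pd n φ i y) ^ 2))
          + φ y ^ (m - 1) * (∑ i, Qd n φ i y))) := by
    unfold lapSpace
    have hterm : ∀ i : Fin n,
        deriv (fun s : ℝ =>
          deriv (fun r : ℝ => φ (R⁻¹ • (x + r • EuclideanSpace.single i (1:ℝ))) ^ m * Θ t) s) 0
        = Θ t * ((m : ℝ) * (R⁻¹ * R⁻¹) *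
            ((((m : ℝ) - 1) * φ y ^ (m - 2) * (Pd n φ i y) ^ 2)
              + φ y ^ (m - 1) * Qd n φ i y)) := by
      intro i
      set e : EuclideanSpace ℝ (Fin n) := EuclideanSpace.single i (1:ℝ) with he
      have hcomp : ∀ r : ℝ, R⁻¹ • (x + r • e) = y + (R⁻¹ * r) • e := by
        intro r; rw [smul_add, smul_smul]
      have hinner : (fun s : ℝ =>
          deriv (fun r : ℝ => φ (R⁻¹ • (x + r • e)) ^ m * Θ t) s) =
          fun s : ℝ => ((m : ℝ) * φ (y + (R⁻¹ * s) • e) ^ (m - 1)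
            * (R⁻¹ * Pd n φ i (y + (R⁻¹ * s) • e))) * Θ t := by
        funext s
        have h := ((hasDerivAt_line hφd y e R⁻¹ s).pow m).mul_const (Θ t)
        have heqf : (fun r : ℝ => φ (y + (R⁻¹ * r) • e) ^ m * Θ t)
            = fun r : ℝ => φ (R⁻¹ • (x + r • e)) ^ m * Θ t := by
          funext r; rw [hcomp r]
        simp only [Pi.pow_apply] at h
        rw [heqf] at h
        exact h.deriv
      rw [hinner]
      have hpt0 : y + (R⁻¹ * (0:ℝ)) • e = y := by simp
      have h1 : HasDerivAt (fun s : ℝ => φ (y + (R⁻¹ * s) • e) ^ (m - 1))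
          (((m : ℝ) - 1) * φ y ^ (m - 2) * (R⁻¹ * Pd n φ i y)) 0 := by
        have := (hasDerivAt_line hφd y e R⁻¹ 0).pow (m - 1)
        rw [hpt0] at this
        have hc : ((m - 1 : ℕ) : ℝ) = (m : ℝ) - 1 := by
          have : (1:ℕ) ≤ m := by omega
          push_cast [Nat.cast_sub this]; ring
        have hc2 : m - 1 - 1 = m - 2 := by omega
        rw [hc, hc2] at this
        exact this
      have h2 : HasDerivAt (fun s : ℝ => Pd n φ i (y + (R⁻¹ * s) • e))
          (R⁻¹ * Qd n φ i y) 0 := by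
        have := hasDerivAt_line ((contDiff_Pd hφ i).differentiable (by simp)) y e R⁻¹ 0
        rw [hpt0] at this
        exact this
      have h3 : HasDerivAt (fun s : ℝ => ((m : ℝ) * φ (y + (R⁻¹ * s) • e) ^ (m - 1)
            * (R⁻¹ * Pd n φ i (y + (R⁻¹ * s) • e))) * Θ t)
          ((((m:ℝ) * (((m : ℝ) - 1) * φ y ^ (m - 2) * (R⁻¹ * Pd n φ i y)))
              * (R⁻¹ * Pd n φ i y)
            + ((m:ℝ) * φ y ^ (m - 1)) * (R⁻¹ * (R⁻¹ * Qd n φ i y))) * Θ t) 0 := by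
        have h4 := ((h1.const_mul (m:ℝ)).mul (h2.const_mul R⁻¹)).mul_const (Θ t)
        simpa [hpt0] using h4
      rw [h3.deriv]
      ring
    rw [Finset.sum_congr rfl (fun i _ => hterm i)]
    rw [← Finset.mul_sum]
    congr 1
    rw [← Finset.mul_sum]
    congr 1
    rw [Finset.sum_add_distrib, ← Finset.mul_sum, ← Finset.mul_sum]
  unfold heatAdjoint
  simp only
  rw [htime, hspace]

lemma integrableOn_mul_of_bdd {n : ℕ}
    {F g : EuclideanSpace ℝ (Fin n) × ℝ → ℝ} {U K : Set (EuclideanSpace ℝ (Fin n) × ℝ)}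
    (hU : MeasurableSet U) (hKU : K ⊆ U) (hK : IsCompact K)
    (hloc : LocallyIntegrableOn F U volume)
    (hgm : AEStronglyMeasurable g (volume.restrict U))
    (hB : ∃ B, ∀ q, |g q| ≤ B)
    (hg0 : ∀ q ∉ K, g q = 0) : IntegrableOn (fun q => F q * g q) U := by
  have hKm : MeasurableSet K := hK.isClosed.measurableSet
  have hFK : IntegrableOn F K volume := hloc.integrableOn_compact_subset hKU hK
  have h1 : IntegrableOn (fun q => F q * g q) K volume := by
    have hgm' : AEStronglyMeasurable g (volume.restrict K) :=
      hgm.mono_measure (Measure.restrict_mono hKU le_rfl)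
    have hB' : ∃ B, ∀ q, ‖g q‖ ≤ B := by
      obtain ⟨B, hB⟩ := hB
      exact ⟨B, fun q => by rw [Real.norm_eq_abs]; exact hB q⟩
    have := Integrable.bdd_mul hFK hgm' (Filter.Eventually.of_forall hB'.choose_spec)
    exact this.congr (Filter.Eventually.of_forall fun q => mul_comm _ _)
  have h2 : IntegrableOn (fun q => F q * g q) (U \ K) volume := by
    rw [integrableOn_congr_fun (g := fun _ => (0:ℝ)) ?_ (hU.diff hKm)]
    · exact integrableOn_zero
    · intro q hq
      simp only
      rw [hg0 q hq.2, mul_zero]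
  refine (h1.union h2).mono_set ?_
  intro q hq
  by_cases hqK : q ∈ K
  · exact Or.inl hqK
  · exact Or.inr ⟨hq, hqK⟩

lemma core_estimate (n : ℕ)
    (v f : EuclideanSpace ℝ (Fin n) → ℝ → ℝ)
    (hvpos : ∀ (x : EuclideanSpace ℝ (Fin n)) (t : ℝ), 0 ≤ v x t)
    (hfpos : ∀ (x : EuclideanSpace ℝ (Fin n)) (t : ℝ), 0 ≤ f x t)
    (hvloc : LocallyIntegrableOn
      (fun q : EuclideanSpace ℝ (Fin n) × ℝ => v q.1 q.2)
      {q : EuclideanSpace ℝ (Fin n) × ℝ | 0 < q.2})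
    (hfloc : LocallyIntegrableOn
      (fun q : EuclideanSpace ℝ (Fin n) × ℝ => f q.1 q.2)
      {q : EuclideanSpace ℝ (Fin n) × ℝ | 0 < q.2})
    (hineq : DistribHeatGe n v f)
    (φ : EuclideanSpace ℝ (Fin n) → ℝ) (ψ : ℝ → ℝ)
    (hφsmooth : ContDiff ℝ (⊤ : ℕ∞) φ) (hψsmooth : ContDiff ℝ (⊤ : ℕ∞) ψ)
    (hφsupp : HasCompactSupport φ) (hψsupp : HasCompactSupport ψ)
    (hφball : tsupport φ ⊆ Metric.ball (0 : EuclideanSpace ℝ (Fin n)) 1)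
    (hψball : tsupport ψ ⊆ Set.Ioo (-1 : ℝ) 1)
    (hφ0 : ∀ x, 0 ≤ φ x) (hφ1 : ∀ x, φ x ≤ 1)
    (hψ0 : ∀ t, 0 ≤ ψ t) (hψ1 : ∀ t, ψ t ≤ 1)
    (hφone : ∀ x ∈ Metric.ball (0 : EuclideanSpace ℝ (Fin n)) (1 / 2), φ x = 1)
    (hψone : ∀ t ∈ Set.Ico (0 : ℝ) (1 / 2), ψ t = 1)
    (β : ℝ) (hβ : 2 < β) (m : ℕ) (hm2 : 2 ≤ m) (hmβ : (m:ℝ) ≤ β) (hβm : β - 1 ≤ (m:ℝ))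
    (M₁ : ℝ) (hM₁ : ∀ s, |deriv ψ s| ≤ M₁)
    (M₂ : ℝ) (hM₂ : ∀ z, |∑ i, Qd n φ i z| ≤ M₂)
    (R t₀ : ℝ) (hR : 1 < R) (ht₀ : 0 < t₀) (k : ℕ) :
    (∫⁻ q in {q : EuclideanSpace ℝ (Fin n) × ℝ | t₀ + 1/((k:ℝ)+1) ≤ q.2},
        ENNReal.ofReal (f q.1 q.2 * (φ (R⁻¹ • q.1) ^ β) * (ψ ((q.2 - t₀) / R ^ 2) ^ β))) ≤
      ENNReal.ofReal (((m:ℝ) * (M₁ + M₂) + 1) / R ^ 2) *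
        ∫⁻ q in (Metric.ball (0 : EuclideanSpace ℝ (Fin n)) R ×ˢ Set.Ioo t₀ (t₀ + R ^ 2)) \
            (Metric.ball (0 : EuclideanSpace ℝ (Fin n)) (R / 2) ×ˢ
              Set.Ioo t₀ (t₀ + R ^ 2 / 2)),
          ENNReal.ofReal (v q.1 q.2 *
            ((φ (R⁻¹ • q.1) ^ β * ψ ((q.2 - t₀) / R ^ 2) ^ β) ^ ((β - 2) / β))) := by
    classical
  -- basic numerology
  have hR0 : (0:ℝ) < R := lt_trans one_pos hR
  have hR2 : (0:ℝ) < R ^ 2 := by positivity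
  have hβ0 : (0:ℝ) < β := by linarith
  have hm0 : m ≠ 0 := by omega
  have hm1 : m - 1 ≠ 0 := by omega
  have hmcast1 : ((m - 1 : ℕ) : ℝ) = (m:ℝ) - 1 := by
    have h1 : (1:ℕ) ≤ m := by omega
    push_cast [Nat.cast_sub h1]; ring
  have hM₁0 : 0 ≤ M₁ := le_trans (abs_nonneg _) (hM₁ 0)
  have hM₂0 : 0 ≤ M₂ := le_trans (abs_nonneg _) (hM₂ 0)
  set U : Set (EuclideanSpace ℝ (Fin n) × ℝ) := {q | 0 < q.2} with hU_def
  set QR : Set (EuclideanSpace ℝ (Fin n) × ℝ) :=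
    (Metric.ball (0 : EuclideanSpace ℝ (Fin n)) R ×ˢ Set.Ioo t₀ (t₀ + R ^ 2)) \
      (Metric.ball (0 : EuclideanSpace ℝ (Fin n)) (R / 2) ×ˢ
        Set.Ioo t₀ (t₀ + R ^ 2 / 2)) with hQR_def
  set K : Set (EuclideanSpace ℝ (Fin n) × ℝ) :=
    Metric.closedBall (0 : EuclideanSpace ℝ (Fin n)) R ×ˢ Set.Icc t₀ (t₀ + R ^ 2) with hK_def
  set Sk : Set (EuclideanSpace ℝ (Fin n) × ℝ) := {q | t₀ + 1/((k:ℝ)+1) ≤ q.2} with hSk_def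
  have hUmeas : MeasurableSet U := (isOpen_lt continuous_const continuous_snd).measurableSet
  have hQRmeas : MeasurableSet QR :=
    ((Metric.isOpen_ball.prod isOpen_Ioo).measurableSet).diff
      ((Metric.isOpen_ball.prod isOpen_Ioo).measurableSet)
  have hSkmeas : MeasurableSet Sk := measurableSet_le measurable_const measurable_snd
  have hKcomp : IsCompact K := (isCompact_closedBall _ _).prod isCompact_Icc
  have hKU : K ⊆ U := by
    rintro ⟨x, t⟩ ⟨-, ht⟩
    exact lt_of_lt_of_le ht₀ ht.1
  have hQRK : QR ⊆ K := by
    rintro ⟨x, t⟩ ⟨⟨hx, ht⟩, -⟩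
    exact ⟨Metric.ball_subset_closedBall hx, ⟨ht.1.le, ht.2.le⟩⟩
  have hQRU : QR ⊆ U := hQRK.trans hKU
  have hSkU : Sk ⊆ U := by
    intro q hq
    have h1 : (0:ℝ) < 1/((k:ℝ)+1) := by positivity
    have h2 : t₀ + 1/((k:ℝ)+1) ≤ q.2 := hq
    show (0:ℝ) < q.2
    linarith
  -- the cutoffs
  set c : ℝ := (k:ℝ) + 1 with hc_def
  have hc0 : (0:ℝ) < c := by rw [hc_def]; positivity
  set Θ : ℝ → ℝ := fun t => ψ ((t - t₀) / R ^ 2) ^ m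
      * Real.smoothTransition (c * (t - t₀)) with hΘ_def
  set Θ' : ℝ → ℝ := fun t =>
    ((m:ℝ) * ψ ((t - t₀) / R ^ 2) ^ (m - 1) * (deriv ψ ((t - t₀) / R ^ 2) * (1 / R ^ 2))) *
        Real.smoothTransition (c * (t - t₀)) +
      ψ ((t - t₀) / R ^ 2) ^ m *
        (deriv Real.smoothTransition (c * (t - t₀)) * c) with hΘ'_def
  have hψdiff : Differentiable ℝ ψ := hψsmooth.differentiable (by simp)
  have hζdiff : Differentiable ℝ Real.smoothTransition :=
    (Real.smoothTransition.contDiff (n := (⊤:ℕ∞))).differentiable (by simp)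
  have hΘderiv : ∀ t, HasDerivAt Θ (Θ' t) t := by
    intro t
    have hσ : HasDerivAt (fun t : ℝ => (t - t₀) / R ^ 2) (1 / R ^ 2) t := by
      simpa using ((hasDerivAt_id t).sub_const t₀).div_const (R ^ 2)
    have hψat : HasDerivAt ψ (deriv ψ ((t - t₀) / R ^ 2)) ((t - t₀) / R ^ 2) :=
      (hψdiff _).hasDerivAt
    have hψc : HasDerivAt (fun t : ℝ => ψ ((t - t₀) / R ^ 2))
        (deriv ψ ((t - t₀) / R ^ 2) * (1 / R ^ 2)) t := hψat.comp t hσ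
    have hκ : HasDerivAt (fun t : ℝ => c * (t - t₀)) c t := by
      simpa using ((hasDerivAt_id t).sub_const t₀).const_mul c
    have hζat : HasDerivAt Real.smoothTransition
        (deriv Real.smoothTransition (c * (t - t₀))) (c * (t - t₀)) :=
      (hζdiff _).hasDerivAt
    have hζc : HasDerivAt (fun t : ℝ => Real.smoothTransition (c * (t - t₀)))
        (deriv Real.smoothTransition (c * (t - t₀)) * c) t := HasDerivAt.comp (h₂ := Real.smoothTransition) t hζat hκ
    exact (hψc.pow m).mul hζc
  set χ : EuclideanSpace ℝ (Fin n) × ℝ → ℝ :=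
    fun p => φ (R⁻¹ • p.1) ^ m * Θ p.2 with hχ_def
  -- vanishing facts
  have hφout : ∀ z : EuclideanSpace ℝ (Fin n), z ∉ Metric.ball (0:EuclideanSpace ℝ (Fin n)) 1 →
      φ z = 0 ∧ (∀ i, Pd n φ i z = 0) ∧ (∀ i, Qd n φ i z = 0) := by
    intro z hz
    have hz' : z ∉ tsupport φ := fun h => hz (hφball h)
    have hopen : IsOpen (tsupport φ)ᶜ := (isClosed_tsupport φ).isOpen_compl
    have hPzero : ∀ w ∉ tsupport φ, ∀ i, Pd n φ i w = 0 := by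
      intro w hw i
      have hev : φ =ᶠ[nhds w] (fun _ => 0) := notMem_tsupport_iff_eventuallyEq.mp hw
      unfold Pd
      rw [hev.fderiv_eq]
      simp
    refine ⟨image_eq_zero_of_notMem_tsupport hz', fun i => hPzero z hz' i, fun i => ?_⟩
    have hev : Pd n φ i =ᶠ[nhds z] (fun _ => 0) := by
      filter_upwards [hopen.mem_nhds hz'] with w hw
      exact hPzero w hw i
    unfold Qd
    rw [hev.fderiv_eq]
    simp
  have hφin : ∀ z : EuclideanSpace ℝ (Fin n),
      z ∈ Metric.ball (0:EuclideanSpace ℝ (Fin n)) (1/2) →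
      (∀ i, Pd n φ i z = 0) ∧ (∀ i, Qd n φ i z = 0) := by
    intro z hz
    have hPzero : ∀ w ∈ Metric.ball (0:EuclideanSpace ℝ (Fin n)) (1/2),
        ∀ i, Pd n φ i w = 0 := by
      intro w hw i
      have hev : φ =ᶠ[nhds w] (fun _ => 1) := by
        filter_upwards [Metric.isOpen_ball.mem_nhds hw] with u hu
        exact hφone u hu
      unfold Pd
      rw [hev.fderiv_eq]
      simp
    refine ⟨fun i => hPzero z hz i, fun i => ?_⟩
    have hev : Pd n φ i =ᶠ[nhds z] (fun _ => 0) := by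
      filter_upwards [Metric.isOpen_ball.mem_nhds hz] with w hw
      exact hPzero w hw i
    unfold Qd
    rw [hev.fderiv_eq]
    simp
  have hψout : ∀ s : ℝ, s ∉ Set.Ioo (-1:ℝ) 1 → ψ s = 0 ∧ deriv ψ s = 0 := by
    intro s hs
    have hs' : s ∉ tsupport ψ := fun h => hs (hψball h)
    have hev : ψ =ᶠ[nhds s] (fun _ => 0) := notMem_tsupport_iff_eventuallyEq.mp hs'
    refine ⟨image_eq_zero_of_notMem_tsupport hs', ?_⟩
    rw [hev.deriv_eq]; simp
  have hψflat : ∀ s : ℝ, s ∈ Set.Ioo (0:ℝ) (1/2) → deriv ψ s = 0 := by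
    intro s hs
    have hev : ψ =ᶠ[nhds s] (fun _ => 1) := by
      filter_upwards [isOpen_Ioo.mem_nhds hs] with u hu
      exact hψone u ⟨hu.1.le, hu.2⟩
    rw [hev.deriv_eq]; simp
  have hyout : ∀ x : EuclideanSpace ℝ (Fin n), x ∉ Metric.ball (0:EuclideanSpace ℝ (Fin n)) R →
      R⁻¹ • x ∉ Metric.ball (0:EuclideanSpace ℝ (Fin n)) 1 := by
    intro x hx
    rw [mem_ball_zero_iff, not_lt] at hx
    rw [mem_ball_zero_iff, not_lt, norm_smul, norm_inv, Real.norm_eq_abs,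
      abs_of_pos hR0]
    calc (1:ℝ) = R⁻¹ * R := by field_simp
      _ ≤ R⁻¹ * ‖x‖ := mul_le_mul_of_nonneg_left hx (inv_pos.2 hR0).le
  have hAsupp : ∀ x : EuclideanSpace ℝ (Fin n), x ∉ Metric.ball (0:EuclideanSpace ℝ (Fin n)) R →
      φ (R⁻¹ • x) = 0 := fun x hx => (hφout _ (hyout x hx)).1
  have hΘ0 : ∀ t, 0 ≤ Θ t := fun t =>
    mul_nonneg (pow_nonneg (hψ0 _) m) (Real.smoothTransition.nonneg _)
  have hΘ1 : ∀ t, Θ t ≤ 1 := fun t =>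
    mul_le_one₀ (pow_le_one₀ (hψ0 _) (hψ1 _)) (Real.smoothTransition.nonneg _)
      (Real.smoothTransition.le_one _)
  have hΘsupp : ∀ t, t ∉ Set.Ioo t₀ (t₀ + R ^ 2) → Θ t = 0 := by
    intro t ht
    rw [Set.mem_Ioo, not_and_or] at ht
    rcases ht with h | h
    · push_neg at h
      have h2 : c * (t - t₀) ≤ 0 := mul_nonpos_of_nonneg_of_nonpos hc0.le (by linarith)
      rw [hΘ_def]
      simp [Real.smoothTransition.zero_of_nonpos h2]
    · push_neg at h
      have hσ1 : (t - t₀)/R^2 ∉ Set.Ioo (-1:ℝ) 1 := by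
        intro hmem
        have h3 := hmem.2
        rw [div_lt_one hR2] at h3
        linarith
      rw [hΘ_def]
      simp [(hψout _ hσ1).1, zero_pow hm0]
  -- smoothness / test function
  have hAcont : ContDiff ℝ (⊤:ℕ∞) (fun x : EuclideanSpace ℝ (Fin n) => φ (R⁻¹ • x) ^ m) :=
    (hφsmooth.comp (contDiff_id.const_smul R⁻¹)).pow m
  have haff1 : ContDiff ℝ (⊤:ℕ∞) (fun t : ℝ => (t - t₀)/R^2) :=
    (contDiff_id.sub contDiff_const).div_const _
  have haff2 : ContDiff ℝ (⊤:ℕ∞) (fun t : ℝ => c * (t - t₀)) :=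
    contDiff_const.mul (contDiff_id.sub contDiff_const)
  have hΘcont : ContDiff ℝ (⊤:ℕ∞) Θ := by
    rw [hΘ_def]
    exact ((hψsmooth.comp haff1).pow m).mul (Real.smoothTransition.contDiff.comp haff2)
  have hχsmooth : ContDiff ℝ (⊤:ℕ∞) χ := by
    rw [hχ_def]
    exact (hAcont.comp contDiff_fst).mul (hΘcont.comp contDiff_snd)
  have hχtsupp : tsupport χ ⊆ K := by
    apply closure_minimal ?_ hKcomp.isClosed
    intro q hq
    rw [Function.mem_support] at hq
    refine ⟨?_, ?_⟩
    · by_contra hx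
      apply hq
      have hx' : q.1 ∉ Metric.ball (0:EuclideanSpace ℝ (Fin n)) R :=
        fun h => hx (Metric.ball_subset_closedBall h)
      rw [hχ_def]
      simp only
      rw [hAsupp q.1 hx', zero_pow hm0, zero_mul]
    · by_contra ht2
      apply hq
      have ht' : q.2 ∉ Set.Ioo t₀ (t₀ + R^2) := by
        intro h
        exact ht2 ⟨h.1.le, h.2.le⟩
      rw [hχ_def]
      simp only
      rw [hΘsupp _ ht', mul_zero]
  have hχtest : IsTestOn n χ :=
    ⟨hχsmooth, hKcomp.of_isClosed_subset (isClosed_tsupport χ) hχtsupp, hχtsupp.trans hKU⟩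
  have hχ0 : ∀ q, 0 ≤ χ q := fun q => mul_nonneg (pow_nonneg (hφ0 _) m) (hΘ0 _)
  have hχ1 : ∀ q, χ q ≤ 1 := fun q =>
    mul_le_one₀ (pow_le_one₀ (hφ0 _) (hφ1 _)) (hΘ0 _) (hΘ1 _)
  -- heat adjoint formula
  set Efun : EuclideanSpace ℝ (Fin n) × ℝ → ℝ := fun q =>
    -(φ (R⁻¹ • q.1) ^ m * Θ' q.2) -
      Θ q.2 * ((m : ℝ) * (R⁻¹ * R⁻¹) *
        ((((m : ℝ) - 1) * φ (R⁻¹ • q.1) ^ (m - 2) * (∑ i, (Pd n φ i (R⁻¹ • q.1)) ^ 2))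
          + φ (R⁻¹ • q.1) ^ (m - 1) * (∑ i, Qd n φ i (R⁻¹ • q.1)))) with hE_def
  have heq : ∀ q, heatAdjoint n χ q = Efun q := fun q =>
    heatAdjoint_eq n hφsmooth hΘderiv R m hm2 q
  set C₀ : ℝ := (m:ℝ) * (M₁ + M₂) with hC₀_def
  have hC₀0 : 0 ≤ C₀ := by rw [hC₀_def]; positivity
  set W : EuclideanSpace ℝ (Fin n) × ℝ → ℝ := fun q =>
    (φ (R⁻¹ • q.1) ^ β * ψ ((q.2 - t₀) / R ^ 2) ^ β) ^ ((β - 2) / β) with hW_def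
  have hW0 : ∀ q, 0 ≤ W q := fun q =>
    Real.rpow_nonneg (mul_nonneg (Real.rpow_nonneg (hφ0 _) _) (Real.rpow_nonneg (hψ0 _) _)) _
  have hW1 : ∀ q, W q ≤ 1 := by
    intro q
    rw [hW_def]
    apply Real.rpow_le_one
      (mul_nonneg (Real.rpow_nonneg (hφ0 _) _) (Real.rpow_nonneg (hψ0 _) _))
    · exact mul_le_one₀ (Real.rpow_le_one (hφ0 _) (hφ1 _) hβ0.le)
        (Real.rpow_nonneg (hψ0 _) _) (Real.rpow_le_one (hψ0 _) (hψ1 _) hβ0.le)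
    · exact div_nonneg (by linarith) hβ0.le
  -- THE POINTWISE BOUND
  have hEbd : ∀ q, Efun q ≤ ((C₀ + 1) / R ^ 2) * Set.indicator QR W q := by
    rintro ⟨x, t⟩
    rw [hE_def]
    simp only [hΘ_def, hΘ'_def]
    set av := φ (R⁻¹ • x) with hav_def
    set bv := ψ ((t - t₀) / R ^ 2) with hbv_def
    set zv := Real.smoothTransition (c * (t - t₀)) with hzv_def
    set dψ := deriv ψ ((t - t₀) / R ^ 2) with hdψ_def
    set dz := deriv Real.smoothTransition (c * (t - t₀)) with hdz_def
    set T1 := ∑ i, (Pd n φ i (R⁻¹ • x)) ^ 2 with hT1_def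
    set T2 := ∑ i, Qd n φ i (R⁻¹ • x) with hT2_def
    have hav0 : 0 ≤ av := hφ0 _
    have hav1 : av ≤ 1 := hφ1 _
    have hbv0 : 0 ≤ bv := hψ0 _
    have hbv1 : bv ≤ 1 := hψ1 _
    have hzv0 : 0 ≤ zv := Real.smoothTransition.nonneg _
    have hzv1 : zv ≤ 1 := Real.smoothTransition.le_one _
    have hdz0 : 0 ≤ dz := deriv_smoothTransition_nonneg _
    have hT10 : 0 ≤ T1 := Finset.sum_nonneg fun i _ => sq_nonneg _
    have hmR1 : (1:ℝ) ≤ (m:ℝ) := by exact_mod_cast (by omega : 1 ≤ m)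
    by_cases hmem : (x, t) ∈ QR
    · rw [Set.indicator_of_mem hmem]
      have hWval : W (x, t) = av ^ (β - 2) * bv ^ (β - 2) := by
        rw [hW_def]
        exact W_eq_rpow hav0 hbv0 hβ
      rw [hWval]
      have hexp1 : av ^ m ≤ av ^ (β - 2) :=
        pow_le_rpow_of_le_one hav0 hav1 (by linarith) (by linarith)
      have hexp2 : av ^ (m-1) ≤ av ^ (β - 2) :=
        pow_le_rpow_of_le_one hav0 hav1 (by linarith) (by rw [hmcast1]; linarith)
      have hexp3 : bv ^ (m-1) ≤ bv ^ (β - 2) :=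
        pow_le_rpow_of_le_one hbv0 hbv1 (by linarith) (by rw [hmcast1]; linarith)
      have hexp4 : bv ^ m ≤ bv ^ (β - 2) :=
        pow_le_rpow_of_le_one hbv0 hbv1 (by linarith) (by linarith)
      have key1 : av ^ m * bv ^ (m-1) * zv ≤ av ^ (β-2) * bv ^ (β-2) := by
        calc av ^ m * bv ^ (m-1) * zv ≤ av ^ m * bv ^ (m-1) * 1 :=
              mul_le_mul_of_nonneg_left hzv1
                (mul_nonneg (pow_nonneg hav0 _) (pow_nonneg hbv0 _))
          _ = av ^ m * bv ^ (m-1) := mul_one _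
          _ ≤ av ^ (β-2) * bv ^ (β-2) :=
              mul_le_mul hexp1 hexp3 (pow_nonneg hbv0 _) (Real.rpow_nonneg hav0 _)
      have key2 : av ^ (m-1) * bv ^ m * zv ≤ av ^ (β-2) * bv ^ (β-2) := by
        calc av ^ (m-1) * bv ^ m * zv ≤ av ^ (m-1) * bv ^ m * 1 :=
              mul_le_mul_of_nonneg_left hzv1
                (mul_nonneg (pow_nonneg hav0 _) (pow_nonneg hbv0 _))
          _ = av ^ (m-1) * bv ^ m := mul_one _
          _ ≤ av ^ (β-2) * bv ^ (β-2) :=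
              mul_le_mul hexp2 hexp4 (pow_nonneg hbv0 _) (Real.rpow_nonneg hav0 _)
      have hs1 : (av ^ m * bv ^ (m-1) * zv * ((1 / R ^ 2) * (m:ℝ))) * (-dψ)
          ≤ (av ^ (β-2) * bv ^ (β-2) * ((1 / R ^ 2) * (m:ℝ))) * M₁ := by
        have h1 : -dψ ≤ M₁ := (neg_le_abs _).trans (hM₁ _)
        calc (av ^ m * bv ^ (m-1) * zv * ((1 / R ^ 2) * (m:ℝ))) * (-dψ)
            ≤ (av ^ m * bv ^ (m-1) * zv * ((1 / R ^ 2) * (m:ℝ))) * M₁ := by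
              apply mul_le_mul_of_nonneg_left h1
              exact mul_nonneg
                (mul_nonneg (mul_nonneg (pow_nonneg hav0 m) (pow_nonneg hbv0 _)) hzv0)
                (by positivity)
          _ ≤ (av ^ (β-2) * bv ^ (β-2) * ((1 / R ^ 2) * (m:ℝ))) * M₁ := by
              apply mul_le_mul_of_nonneg_right _ hM₁0
              exact mul_le_mul_of_nonneg_right key1 (by positivity)
      have hs3 : (av ^ (m-1) * bv ^ m * zv * ((R⁻¹ * R⁻¹) * (m:ℝ))) * (-T2)
          ≤ (av ^ (β-2) * bv ^ (β-2) * ((R⁻¹ * R⁻¹) * (m:ℝ))) * M₂ := by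
        have h1 : -T2 ≤ M₂ := (neg_le_abs _).trans (hM₂ _)
        calc (av ^ (m-1) * bv ^ m * zv * ((R⁻¹ * R⁻¹) * (m:ℝ))) * (-T2)
            ≤ (av ^ (m-1) * bv ^ m * zv * ((R⁻¹ * R⁻¹) * (m:ℝ))) * M₂ := by
              apply mul_le_mul_of_nonneg_left h1
              exact mul_nonneg
                (mul_nonneg (mul_nonneg (pow_nonneg hav0 _) (pow_nonneg hbv0 _)) hzv0)
                (by positivity)
          _ ≤ (av ^ (β-2) * bv ^ (β-2) * ((R⁻¹ * R⁻¹) * (m:ℝ))) * M₂ := by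
              apply mul_le_mul_of_nonneg_right _ hM₂0
              exact mul_le_mul_of_nonneg_right key2 (by positivity)
      have hs2 : -(av ^ m * (bv ^ m * (dz * c))) ≤ 0 :=
        neg_nonpos.2 (mul_nonneg (pow_nonneg hav0 _)
          (mul_nonneg (pow_nonneg hbv0 _) (mul_nonneg hdz0 hc0.le)))
      have hs4 : -((bv ^ m * zv) * ((m:ℝ) * (R⁻¹ * R⁻¹) *
          (((m:ℝ) - 1) * av ^ (m-2) * T1))) ≤ 0 := by
        apply neg_nonpos.2
        apply mul_nonneg (mul_nonneg (pow_nonneg hbv0 _) hzv0)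
        apply mul_nonneg (mul_nonneg (Nat.cast_nonneg m) (by positivity))
        exact mul_nonneg (mul_nonneg (by linarith) (pow_nonneg hav0 _)) hT10
      have hsplit : -(av ^ m * (((m:ℝ) * bv ^ (m-1) * (dψ * (1 / R ^ 2))) * zv
            + bv ^ m * (dz * c))) -
          (bv ^ m * zv) * ((m:ℝ) * (R⁻¹ * R⁻¹) *
            ((((m:ℝ) - 1) * av ^ (m - 2) * T1) + av ^ (m-1) * T2))
          = (av ^ m * bv ^ (m-1) * zv * ((1 / R ^ 2) * (m:ℝ))) * (-dψ)
            + (-(av ^ m * (bv ^ m * (dz * c))))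
            + ((av ^ (m-1) * bv ^ m * zv * ((R⁻¹ * R⁻¹) * (m:ℝ))) * (-T2))
            + (-((bv ^ m * zv) * ((m:ℝ) * (R⁻¹ * R⁻¹) *
                (((m:ℝ) - 1) * av ^ (m-2) * T1)))) := by ring
      rw [hsplit]
      have hRR : R⁻¹ * R⁻¹ = 1 / R ^ 2 := by rw [one_div, sq, mul_inv]
      calc (av ^ m * bv ^ (m-1) * zv * ((1 / R ^ 2) * (m:ℝ))) * (-dψ)
            + (-(av ^ m * (bv ^ m * (dz * c))))
            + ((av ^ (m-1) * bv ^ m * zv * ((R⁻¹ * R⁻¹) * (m:ℝ))) * (-T2))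
            + (-((bv ^ m * zv) * ((m:ℝ) * (R⁻¹ * R⁻¹) *
                (((m:ℝ) - 1) * av ^ (m-2) * T1))))
          ≤ (av ^ (β-2) * bv ^ (β-2) * ((1 / R ^ 2) * (m:ℝ))) * M₁ + 0
            + (av ^ (β-2) * bv ^ (β-2) * ((R⁻¹ * R⁻¹) * (m:ℝ))) * M₂ + 0 :=
            add_le_add (add_le_add (add_le_add hs1 hs2) hs3) hs4
        _ = (C₀ / R ^ 2) * (av ^ (β-2) * bv ^ (β-2)) := by
            rw [hRR, hC₀_def]; ring
        _ ≤ ((C₀ + 1) / R ^ 2) * (av ^ (β-2) * bv ^ (β-2)) := by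
            apply mul_le_mul_of_nonneg_right _
              (mul_nonneg (Real.rpow_nonneg hav0 _) (Real.rpow_nonneg hbv0 _))
            gcongr
            linarith
    · rw [Set.indicator_of_notMem hmem, mul_zero]
      rcases le_or_gt t t₀ with ht | ht
      · have h1 : zv = 0 := by
          rw [hzv_def]
          exact Real.smoothTransition.zero_of_nonpos
            (mul_nonpos_of_nonneg_of_nonpos hc0.le (by linarith))
        have h2 : dz = 0 := by
          rw [hdz_def]
          exact deriv_smoothTransition_nonpos_zero
            (mul_nonpos_of_nonneg_of_nonpos hc0.le (by linarith))
        rw [h1, h2]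
        simp
      · by_cases hbox : x ∈ Metric.ball (0:EuclideanSpace ℝ (Fin n)) R ∧ t < t₀ + R^2
        · have hsmall : (x, t) ∈ Metric.ball (0:EuclideanSpace ℝ (Fin n)) (R/2) ×ˢ
              Set.Ioo t₀ (t₀ + R^2/2) := by
            by_contra hns
            exact hmem ⟨⟨hbox.1, ⟨ht, hbox.2⟩⟩, hns⟩
          obtain ⟨hx2, ht2⟩ := hsmall
          have hy : R⁻¹ • x ∈ Metric.ball (0:EuclideanSpace ℝ (Fin n)) (1/2) := by
            rw [mem_ball_zero_iff] at hx2 ⊢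
            rw [norm_smul, norm_inv, Real.norm_eq_abs, abs_of_pos hR0]
            calc R⁻¹ * ‖x‖ < R⁻¹ * (R/2) := mul_lt_mul_of_pos_left hx2 (inv_pos.2 hR0)
              _ = 1/2 := by field_simp
          have hσmem : (t - t₀)/R^2 ∈ Set.Ioo (0:ℝ) (1/2) := by
            constructor
            · exact div_pos (by linarith) hR2
            · rw [div_lt_iff₀ hR2]
              have h5 := ht2.2
              linarith
          have hdψ0 : dψ = 0 := by rw [hdψ_def]; exact hψflat _ hσmem
          have hT1z : T1 = 0 := by
            rw [hT1_def]
            apply Finset.sum_eq_zero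
            intro i _
            rw [(hφin _ hy).1 i]
            ring
          have hT2z : T2 = 0 := by
            rw [hT2_def]
            exact Finset.sum_eq_zero fun i _ => (hφin _ hy).2 i
          rw [hdψ0, hT1z, hT2z]
          have hend : -(av ^ m * (((m:ℝ) * bv ^ (m-1) * (0 * (1 / R ^ 2))) * zv
                + bv ^ m * (dz * c))) -
              (bv ^ m * zv) * ((m:ℝ) * (R⁻¹ * R⁻¹) *
                ((((m:ℝ) - 1) * av ^ (m - 2) * 0) + av ^ (m-1) * 0))
              = -(av ^ m * (bv ^ m * (dz * c))) := by ring
          rw [hend]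
          exact neg_nonpos.2 (mul_nonneg (pow_nonneg hav0 _)
            (mul_nonneg (pow_nonneg hbv0 _) (mul_nonneg hdz0 hc0.le)))
        · rw [not_and_or] at hbox
          rcases hbox with hxball | ht3
          · have hφz : av = 0 := by rw [hav_def]; exact hAsupp x hxball
            have hT1z : T1 = 0 := by
              rw [hT1_def]
              apply Finset.sum_eq_zero
              intro i _
              rw [(hφout _ (hyout x hxball)).2.1 i]
              ring
            rw [hφz, hT1z, zero_pow hm0, zero_pow hm1]
            simp
          · push_neg at ht3
            have hσ1 : (t - t₀)/R^2 ∉ Set.Ioo (-1:ℝ) 1 := by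
              intro hmem'
              have h3 := hmem'.2
              rw [div_lt_one hR2] at h3
              linarith
            have hb0 : bv = 0 := by rw [hbv_def]; exact (hψout _ hσ1).1
            have hdψz : dψ = 0 := by rw [hdψ_def]; exact (hψout _ hσ1).2
            rw [hb0, hdψz, zero_pow hm0, zero_pow hm1]
            simp
    -- support of Efun
  have hEsupp : ∀ q ∉ K, Efun q = 0 := by
    rintro ⟨x, t⟩ hq
    have hcases : x ∉ Metric.ball (0:EuclideanSpace ℝ (Fin n)) R ∨ t < t₀ ∨ t₀ + R^2 < t := by
      by_contra hcon
      push_neg at hcon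
      obtain ⟨h1, h2, h3⟩ := hcon
      exact hq ⟨Metric.ball_subset_closedBall h1, ⟨h2, h3⟩⟩
    rw [hE_def]
    simp only [hΘ_def, hΘ'_def]
    rcases hcases with hx | ht | ht
    · have hφz : φ (R⁻¹ • x) = 0 := hAsupp x hx
      have hT1z : (∑ i, (Pd n φ i (R⁻¹ • x)) ^ 2) = 0 := by
        apply Finset.sum_eq_zero
        intro i _
        rw [(hφout _ (hyout x hx)).2.1 i]
        ring
      rw [hφz, hT1z, zero_pow hm0, zero_pow hm1]
      simp
    · have h1 : Real.smoothTransition (c * (t - t₀)) = 0 :=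
        Real.smoothTransition.zero_of_nonpos
          (mul_nonpos_of_nonneg_of_nonpos hc0.le (by linarith))
      have h2 : deriv Real.smoothTransition (c * (t - t₀)) = 0 :=
        deriv_smoothTransition_nonpos_zero
          (mul_nonpos_of_nonneg_of_nonpos hc0.le (by linarith))
      rw [h1, h2]
      simp
    · have hσ1 : (t - t₀)/R^2 ∉ Set.Ioo (-1:ℝ) 1 := by
        intro hmem'
        have h3 := hmem'.2
        rw [div_lt_one hR2] at h3
        linarith
      rw [(hψout _ hσ1).1, (hψout _ hσ1).2, zero_pow hm0, zero_pow hm1]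
      simp
  -- continuity of Efun
  have hdψcont : Continuous (deriv ψ) := hψsmooth.continuous_deriv (by exact_mod_cast le_top)
  have hdζcont : Continuous (deriv Real.smoothTransition) :=
    (Real.smoothTransition.contDiff (n := (⊤:ℕ∞))).continuous_deriv (by exact_mod_cast le_top)
  have hsmulcont : Continuous (fun q : EuclideanSpace ℝ (Fin n) × ℝ => R⁻¹ • q.1) :=
    continuous_fst.const_smul R⁻¹
  have hacont : Continuous (fun q : EuclideanSpace ℝ (Fin n) × ℝ => φ (R⁻¹ • q.1)) :=
    hφsmooth.continuous.comp hsmulcont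
  have hσcont : Continuous (fun q : EuclideanSpace ℝ (Fin n) × ℝ => (q.2 - t₀)/R^2) :=
    (continuous_snd.sub continuous_const).div_const _
  have hbcont : Continuous (fun q : EuclideanSpace ℝ (Fin n) × ℝ => ψ ((q.2 - t₀)/R^2)) :=
    hψsmooth.continuous.comp hσcont
  have hκcont : Continuous (fun q : EuclideanSpace ℝ (Fin n) × ℝ => c * (q.2 - t₀)) :=
    continuous_const.mul (continuous_snd.sub continuous_const)
  have hζqcont : Continuous
      (fun q : EuclideanSpace ℝ (Fin n) × ℝ => Real.smoothTransition (c * (q.2 - t₀))) :=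
    Real.smoothTransition.continuous.comp hκcont
  have hT1cont : Continuous
      (fun q : EuclideanSpace ℝ (Fin n) × ℝ => ∑ i, (Pd n φ i (R⁻¹ • q.1)) ^ 2) := by
    apply continuous_finset_sum
    intro i _
    exact (((contDiff_Pd hφsmooth i).continuous.comp hsmulcont).pow 2)
  have hT2cont : Continuous
      (fun q : EuclideanSpace ℝ (Fin n) × ℝ => ∑ i, Qd n φ i (R⁻¹ • q.1)) := by
    apply continuous_finset_sum
    intro i _
    have hQc : Continuous (Qd n φ i) := (contDiff_Pd (contDiff_Pd hφsmooth i) i).continuous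
    exact hQc.comp hsmulcont
  have hEcont : Continuous Efun := by
    rw [hE_def]
    simp only [hΘ_def, hΘ'_def]
    apply Continuous.sub
    · apply Continuous.neg
      apply Continuous.mul (hacont.pow m)
      apply Continuous.add
      · apply Continuous.mul
        · exact (continuous_const.mul (hbcont.pow (m-1))).mul
            ((hdψcont.comp hσcont).mul continuous_const)
        · exact hζqcont
      · exact (hbcont.pow m).mul ((hdζcont.comp hκcont).mul continuous_const)
    · apply Continuous.mul ((hbcont.pow m).mul hζqcont)
      apply Continuous.mul continuous_const
      apply Continuous.add
      · exact (continuous_const.mul (hacont.pow (m-2))).mul hT1cont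
      · exact (hacont.pow (m-1)).mul hT2cont
  have hEcs : HasCompactSupport Efun := by
    apply hKcomp.of_isClosed_subset (isClosed_tsupport _)
    apply closure_minimal ?_ hKcomp.isClosed
    intro q hq
    rw [Function.mem_support] at hq
    by_contra hqK
    exact hq (hEsupp q hqK)
  obtain ⟨BE, hBE⟩ := hEcont.bounded_above_of_compact_support hEcs
  -- integrability
  have hg₁cont : Continuous (fun q : EuclideanSpace ℝ (Fin n) × ℝ =>
      φ (R⁻¹ • q.1) ^ β * ψ ((q.2 - t₀)/R^2) ^ β * Real.smoothTransition (c * (q.2 - t₀))) := by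
    apply Continuous.mul _ hζqcont
    exact (hacont.rpow_const (fun q => Or.inr hβ0.le)).mul
      (hbcont.rpow_const (fun q => Or.inr hβ0.le))
  have hg₁mem : ∀ q : EuclideanSpace ℝ (Fin n) × ℝ,
      0 ≤ φ (R⁻¹ • q.1) ^ β * ψ ((q.2 - t₀)/R^2) ^ β * Real.smoothTransition (c * (q.2 - t₀)) ∧
      φ (R⁻¹ • q.1) ^ β * ψ ((q.2 - t₀)/R^2) ^ β * Real.smoothTransition (c * (q.2 - t₀)) ≤ 1 := by
    intro q
    constructor
    · exact mul_nonneg (mul_nonneg (Real.rpow_nonneg (hφ0 _) _) (Real.rpow_nonneg (hψ0 _) _))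
        (Real.smoothTransition.nonneg _)
    · exact mul_le_one₀
        (mul_le_one₀ (Real.rpow_le_one (hφ0 _) (hφ1 _) hβ0.le) (Real.rpow_nonneg (hψ0 _) _)
          (Real.rpow_le_one (hψ0 _) (hψ1 _) hβ0.le))
        (Real.smoothTransition.nonneg _) (Real.smoothTransition.le_one _)
  have hg₁0 : ∀ q : EuclideanSpace ℝ (Fin n) × ℝ, q ∉ K →
      φ (R⁻¹ • q.1) ^ β * ψ ((q.2 - t₀)/R^2) ^ β * Real.smoothTransition (c * (q.2 - t₀)) = 0 := by
    rintro ⟨x, t⟩ hq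
    have hcases : x ∉ Metric.ball (0:EuclideanSpace ℝ (Fin n)) R ∨ t < t₀ ∨ t₀ + R^2 < t := by
      by_contra hcon
      push_neg at hcon
      obtain ⟨h1, h2, h3⟩ := hcon
      exact hq ⟨Metric.ball_subset_closedBall h1, ⟨h2, h3⟩⟩
    rcases hcases with hx | ht | ht
    · rw [hAsupp x hx, Real.zero_rpow (ne_of_gt hβ0), zero_mul, zero_mul]
    · rw [Real.smoothTransition.zero_of_nonpos
        (mul_nonpos_of_nonneg_of_nonpos hc0.le (by linarith)), mul_zero]
    · have hσ1 : (t - t₀)/R^2 ∉ Set.Ioo (-1:ℝ) 1 := by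
        intro hmem'
        have h3 := hmem'.2
        rw [div_lt_one hR2] at h3
        linarith
      rw [(hψout _ hσ1).1, Real.zero_rpow (ne_of_gt hβ0), mul_zero, zero_mul]
  have hFk_int : IntegrableOn (fun q : EuclideanSpace ℝ (Fin n) × ℝ => f q.1 q.2 *
      (φ (R⁻¹ • q.1) ^ β * ψ ((q.2 - t₀)/R^2) ^ β *
        Real.smoothTransition (c * (q.2 - t₀)))) U :=
    integrableOn_mul_of_bdd hUmeas hKU hKcomp hfloc hg₁cont.aestronglyMeasurable
      ⟨1, fun q => abs_le.2 ⟨by linarith [(hg₁mem q).1], (hg₁mem q).2⟩⟩ hg₁0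
  have hχzero : ∀ q ∉ K, χ q = 0 := by
    intro q hq
    have : q ∉ tsupport χ := fun h => hq (hχtsupp h)
    exact image_eq_zero_of_notMem_tsupport this
  have hfχ_int : IntegrableOn (fun q : EuclideanSpace ℝ (Fin n) × ℝ =>
      f q.1 q.2 * χ q) U :=
    integrableOn_mul_of_bdd hUmeas hKU hKcomp hfloc (hχsmooth.continuous).aestronglyMeasurable
      ⟨1, fun q => abs_le.2 ⟨by linarith [hχ0 q], hχ1 q⟩⟩ hχzero
  have hvE_int : IntegrableOn (fun q : EuclideanSpace ℝ (Fin n) × ℝ =>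
      v q.1 q.2 * Efun q) U :=
    integrableOn_mul_of_bdd hUmeas hKU hKcomp hvloc hEcont.aestronglyMeasurable
      ⟨BE, fun q => by rw [← Real.norm_eq_abs]; exact hBE q⟩ hEsupp
  have hWcont : Continuous W := by
    rw [hW_def]
    apply Continuous.rpow_const
    · exact (hacont.rpow_const (fun q => Or.inr hβ0.le)).mul
        (hbcont.rpow_const (fun q => Or.inr hβ0.le))
    · exact fun q => Or.inr (div_nonneg (by linarith) hβ0.le)
  have hCR0 : (0:ℝ) ≤ (C₀ + 1) / R ^ 2 := by positivity
  have hvInd_int : IntegrableOn (fun q : EuclideanSpace ℝ (Fin n) × ℝ =>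
      v q.1 q.2 * (((C₀ + 1) / R ^ 2) * Set.indicator QR W q)) U := by
    apply integrableOn_mul_of_bdd hUmeas hKU hKcomp hvloc
    · exact ((hWcont.aestronglyMeasurable).indicator hQRmeas).const_mul _
    · refine ⟨(C₀ + 1) / R ^ 2, fun q => ?_⟩
      rw [abs_mul, abs_of_nonneg hCR0]
      by_cases hq : q ∈ QR
      · rw [Set.indicator_of_mem hq, abs_of_nonneg (hW0 q)]
        calc (C₀ + 1) / R ^ 2 * W q ≤ (C₀ + 1) / R ^ 2 * 1 :=
              mul_le_mul_of_nonneg_left (hW1 q) hCR0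
          _ = (C₀ + 1) / R ^ 2 := mul_one _
      · rw [Set.indicator_of_notMem hq]
        simpa using hCR0
    · intro q hq
      rw [Set.indicator_of_notMem (fun hmem => hq (hQRK hmem)), mul_zero]
  have hvW_int : IntegrableOn (fun q : EuclideanSpace ℝ (Fin n) × ℝ =>
      v q.1 q.2 * W q) QR := by
    have h1 : IntegrableOn (fun q : EuclideanSpace ℝ (Fin n) × ℝ => v q.1 q.2) QR :=
      (hvloc.integrableOn_compact_subset hKU hKcomp).mono_set hQRK
    have h2 := Integrable.bdd_mul h1 hWcont.aestronglyMeasurable (c := 1)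
      (Filter.Eventually.of_forall fun q => by rw [Real.norm_eq_abs, abs_of_nonneg (hW0 q)]; exact hW1 q)
    exact h2.congr (Filter.Eventually.of_forall fun q => mul_comm _ _)
  -- real-integral chain
  have step1 : (∫ q in U, f q.1 q.2 *
      (φ (R⁻¹ • q.1) ^ β * ψ ((q.2 - t₀)/R^2) ^ β * Real.smoothTransition (c * (q.2 - t₀)))) ≤
      ∫ q in U, f q.1 q.2 * χ q := by
    apply integral_mono hFk_int hfχ_int
    intro q
    apply mul_le_mul_of_nonneg_left _ (hfpos _ _)
    have h1 : φ (R⁻¹ • q.1) ^ β ≤ φ (R⁻¹ • q.1) ^ m :=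
      rpow_le_pow_of_le_one (hφ0 _) (hφ1 _) hmβ
    have h2 : ψ ((q.2 - t₀)/R^2) ^ β ≤ ψ ((q.2 - t₀)/R^2) ^ m :=
      rpow_le_pow_of_le_one (hψ0 _) (hψ1 _) hmβ
    calc φ (R⁻¹ • q.1) ^ β * ψ ((q.2 - t₀)/R^2) ^ β * Real.smoothTransition (c * (q.2 - t₀))
        ≤ φ (R⁻¹ • q.1) ^ m * ψ ((q.2 - t₀)/R^2) ^ m * Real.smoothTransition (c * (q.2 - t₀)) := by
          apply mul_le_mul_of_nonneg_right _ (Real.smoothTransition.nonneg _)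
          exact mul_le_mul h1 h2 (Real.rpow_nonneg (hψ0 _) _) (pow_nonneg (hφ0 _) _)
      _ = χ q := by rw [hχ_def]; simp only [hΘ_def]; ring
  have step2 : (∫ q in U, f q.1 q.2 * χ q) ≤ ∫ q in U, v q.1 q.2 * heatAdjoint n χ q := by
    have h := hineq χ hχtest hχ0
    rw [← hU_def] at h
    exact h
  have step3 : (∫ q in U, v q.1 q.2 * heatAdjoint n χ q) = ∫ q in U, v q.1 q.2 * Efun q :=
    integral_congr_ae (Filter.Eventually.of_forall (fun q => congrArg (fun z => v q.1 q.2 * z) (heq q)))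
  have step4 : (∫ q in U, v q.1 q.2 * Efun q) ≤
      ∫ q in U, v q.1 q.2 * (((C₀ + 1) / R ^ 2) * Set.indicator QR W q) :=
    integral_mono hvE_int hvInd_int (fun q => mul_le_mul_of_nonneg_left (hEbd q) (hvpos _ _))
  have step5 : (∫ q in U, v q.1 q.2 * (((C₀ + 1) / R ^ 2) * Set.indicator QR W q)) =
      ((C₀ + 1) / R ^ 2) * ∫ q in QR, v q.1 q.2 * W q := by
    have hfe : (fun q : EuclideanSpace ℝ (Fin n) × ℝ =>
        v q.1 q.2 * (((C₀ + 1) / R ^ 2) * Set.indicator QR W q)) =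
        fun q => ((C₀ + 1) / R ^ 2) * Set.indicator QR (fun p => v p.1 p.2 * W p) q := by
      funext q
      by_cases hq : q ∈ QR
      · rw [Set.indicator_of_mem hq, Set.indicator_of_mem hq]; ring
      · rw [Set.indicator_of_notMem hq, Set.indicator_of_notMem hq]; ring
    rw [hfe, integral_const_mul]
    congr 1
    rw [integral_indicator hQRmeas, Measure.restrict_restrict hQRmeas,
      Set.inter_eq_self_of_subset_left hQRU]
  have main_real : (∫ q in U, f q.1 q.2 *
      (φ (R⁻¹ • q.1) ^ β * ψ ((q.2 - t₀)/R^2) ^ β * Real.smoothTransition (c * (q.2 - t₀)))) ≤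
      ((C₀ + 1) / R ^ 2) * ∫ q in QR, v q.1 q.2 * W q := by
    calc _ ≤ ∫ q in U, f q.1 q.2 * χ q := step1
      _ ≤ ∫ q in U, v q.1 q.2 * heatAdjoint n χ q := step2
      _ = ∫ q in U, v q.1 q.2 * Efun q := step3
      _ ≤ ∫ q in U, v q.1 q.2 * (((C₀ + 1) / R ^ 2) * Set.indicator QR W q) := step4
      _ = ((C₀ + 1) / R ^ 2) * ∫ q in QR, v q.1 q.2 * W q := step5
  -- lintegral chain
  have hL1 : (∫⁻ q in Sk, ENNReal.ofReal
      (f q.1 q.2 * (φ (R⁻¹ • q.1) ^ β) * (ψ ((q.2 - t₀) / R ^ 2) ^ β))) =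
      ∫⁻ q in Sk, ENNReal.ofReal (f q.1 q.2 *
        (φ (R⁻¹ • q.1) ^ β * ψ ((q.2 - t₀)/R^2) ^ β *
          Real.smoothTransition (c * (q.2 - t₀)))) := by
    apply setLIntegral_congr_fun hSkmeas
    intro q hq
    have hq' : t₀ + 1/((k:ℝ)+1) ≤ q.2 := hq
    have hz1 : Real.smoothTransition (c * (q.2 - t₀)) = 1 := by
      apply Real.smoothTransition.one_of_one_le
      have h1 : 1/c ≤ q.2 - t₀ := by rw [hc_def]; linarith
      calc (1:ℝ) = c * (1/c) := by field_simp
        _ ≤ c * (q.2 - t₀) := mul_le_mul_of_nonneg_left h1 hc0.le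
    beta_reduce
    rw [hz1, mul_one]
    congr 1
    ring
  have hL2 : (∫⁻ q in Sk, ENNReal.ofReal (f q.1 q.2 *
      (φ (R⁻¹ • q.1) ^ β * ψ ((q.2 - t₀)/R^2) ^ β *
        Real.smoothTransition (c * (q.2 - t₀))))) ≤
      ∫⁻ q in U, ENNReal.ofReal (f q.1 q.2 *
        (φ (R⁻¹ • q.1) ^ β * ψ ((q.2 - t₀)/R^2) ^ β *
          Real.smoothTransition (c * (q.2 - t₀)))) := lintegral_mono_set hSkU
  have hL3 : (∫⁻ q in U, ENNReal.ofReal (f q.1 q.2 *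
      (φ (R⁻¹ • q.1) ^ β * ψ ((q.2 - t₀)/R^2) ^ β *
        Real.smoothTransition (c * (q.2 - t₀))))) =
      ENNReal.ofReal (∫ q in U, f q.1 q.2 *
        (φ (R⁻¹ • q.1) ^ β * ψ ((q.2 - t₀)/R^2) ^ β *
          Real.smoothTransition (c * (q.2 - t₀)))) :=
    (ofReal_integral_eq_lintegral_ofReal hFk_int
      (Filter.Eventually.of_forall (fun q => mul_nonneg (hfpos _ _) (hg₁mem q).1))).symm
  have hL6 : ENNReal.ofReal (∫ q in QR, v q.1 q.2 * W q) =
      ∫⁻ q in QR, ENNReal.ofReal (v q.1 q.2 * W q) :=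
    ofReal_integral_eq_lintegral_ofReal hvW_int
      (Filter.Eventually.of_forall (fun q => mul_nonneg (hvpos _ _) (hW0 q)))
  calc (∫⁻ q in Sk, ENNReal.ofReal
        (f q.1 q.2 * (φ (R⁻¹ • q.1) ^ β) * (ψ ((q.2 - t₀) / R ^ 2) ^ β)))
      = ∫⁻ q in Sk, ENNReal.ofReal (f q.1 q.2 *
          (φ (R⁻¹ • q.1) ^ β * ψ ((q.2 - t₀)/R^2) ^ β *
            Real.smoothTransition (c * (q.2 - t₀)))) := hL1
    _ ≤ ∫⁻ q in U, ENNReal.ofReal (f q.1 q.2 *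
          (φ (R⁻¹ • q.1) ^ β * ψ ((q.2 - t₀)/R^2) ^ β *
            Real.smoothTransition (c * (q.2 - t₀)))) := hL2
    _ = ENNReal.ofReal (∫ q in U, f q.1 q.2 *
          (φ (R⁻¹ • q.1) ^ β * ψ ((q.2 - t₀)/R^2) ^ β *
            Real.smoothTransition (c * (q.2 - t₀)))) := hL3
    _ ≤ ENNReal.ofReal (((C₀ + 1) / R ^ 2) * ∫ q in QR, v q.1 q.2 * W q) :=
        ENNReal.ofReal_le_ofReal main_real
    _ = ENNReal.ofReal ((C₀ + 1) / R ^ 2) * ENNReal.ofReal (∫ q in QR, v q.1 q.2 * W q) :=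
        ENNReal.ofReal_mul hCR0
    _ = ENNReal.ofReal ((C₀ + 1) / R ^ 2) * ∫⁻ q in QR, ENNReal.ofReal (v q.1 q.2 * W q) := by
        rw [hL6]
    _ = ENNReal.ofReal (((m:ℝ) * (M₁ + M₂) + 1) / R ^ 2) *
          ∫⁻ q in QR, ENNReal.ofReal (v q.1 q.2 * W q) := by rw [hC₀_def]


theorem cutoff_test_function_estimate (n : ℕ) (hn : 1 ≤ n)
    (v f : EuclideanSpace ℝ (Fin n) → ℝ → ℝ)
    (hvpos : ∀ (x : EuclideanSpace ℝ (Fin n)) (t : ℝ), 0 ≤ v x t)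
    (hfpos : ∀ (x : EuclideanSpace ℝ (Fin n)) (t : ℝ), 0 ≤ f x t)
    (hvloc : LocallyIntegrableOn
      (fun q : EuclideanSpace ℝ (Fin n) × ℝ => v q.1 q.2)
      {q : EuclideanSpace ℝ (Fin n) × ℝ | 0 < q.2})
    (hfloc : LocallyIntegrableOn
      (fun q : EuclideanSpace ℝ (Fin n) × ℝ => f q.1 q.2)
      {q : EuclideanSpace ℝ (Fin n) × ℝ | 0 < q.2})
    (hineq : DistribHeatGe n v f)
    (φ : EuclideanSpace ℝ (Fin n) → ℝ) (ψ : ℝ → ℝ)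
    (hφsmooth : ContDiff ℝ (⊤ : ℕ∞) φ) (hψsmooth : ContDiff ℝ (⊤ : ℕ∞) ψ)
    (hφsupp : HasCompactSupport φ) (hψsupp : HasCompactSupport ψ)
    (hφball : tsupport φ ⊆ Metric.ball (0 : EuclideanSpace ℝ (Fin n)) 1)
    (hψball : tsupport ψ ⊆ Set.Ioo (-1 : ℝ) 1)
    (hφ0 : ∀ x, 0 ≤ φ x) (hφ1 : ∀ x, φ x ≤ 1)
    (hψ0 : ∀ t, 0 ≤ ψ t) (hψ1 : ∀ t, ψ t ≤ 1)
    (hφone : ∀ x ∈ Metric.ball (0 : EuclideanSpace ℝ (Fin n)) (1 / 2), φ x = 1)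
    (hψone : ∀ t ∈ Set.Ico (0 : ℝ) (1 / 2), ψ t = 1)
    (β : ℝ) (hβ : 2 < β) :
    ∃ C : ℝ, 0 < C ∧ ∀ R t₀ : ℝ, 1 < R → 0 < t₀ →
      (∫⁻ q in {q : EuclideanSpace ℝ (Fin n) × ℝ | t₀ < q.2},
        ENNReal.ofReal (f q.1 q.2 * (φ (R⁻¹ • q.1) ^ β) * (ψ ((q.2 - t₀) / R ^ 2) ^ β))) ≤
      ENNReal.ofReal (C / R ^ 2) *
        ∫⁻ q in (Metric.ball (0 : EuclideanSpace ℝ (Fin n)) R ×ˢ Set.Ioo t₀ (t₀ + R ^ 2)) \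
            (Metric.ball (0 : EuclideanSpace ℝ (Fin n)) (R / 2) ×ˢ
              Set.Ioo t₀ (t₀ + R ^ 2 / 2)),
          ENNReal.ofReal (v q.1 q.2 *
            ((φ (R⁻¹ • q.1) ^ β * ψ ((q.2 - t₀) / R ^ 2) ^ β) ^ ((β - 2) / β))) := by
  classical
  have hβ0 : (0:ℝ) < β := by linarith
  -- choose the natural exponent m
  set m : ℕ := ⌈β⌉₊ - 1 with hm_def
  have hceil3 : 3 ≤ ⌈β⌉₊ := by
    have : (2:ℕ) < ⌈β⌉₊ := Nat.lt_ceil.mpr (by exact_mod_cast hβ)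
    omega
  have hm2 : 2 ≤ m := by omega
  have hceilcast : ((⌈β⌉₊ : ℕ) : ℝ) < β + 1 := Nat.ceil_lt_add_one hβ0.le
  have hmcast : ((m : ℕ) : ℝ) = ((⌈β⌉₊ : ℕ) : ℝ) - 1 := by
    have h1 : (1:ℕ) ≤ ⌈β⌉₊ := by omega
    rw [hm_def]
    push_cast [Nat.cast_sub h1]
    ring
  have hmβ : (m:ℝ) ≤ β := by rw [hmcast]; linarith
  have hβm : β - 1 ≤ (m:ℝ) := by
    have := Nat.le_ceil β
    rw [hmcast]
    linarith
  -- bounds on derivatives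
  obtain ⟨M₁', hM₁'⟩ := (hψsmooth.continuous_deriv (by exact_mod_cast le_top)
      ).bounded_above_of_compact_support hψsupp.deriv
  have hM₁ : ∀ s, |deriv ψ s| ≤ M₁' := fun s => by
    rw [← Real.norm_eq_abs]; exact hM₁' s
  have hQcont : ∀ i : Fin n, Continuous (Qd n φ i) := fun i =>
    (contDiff_Pd (contDiff_Pd hφsmooth i) i).continuous
  have hQsupp : ∀ i : Fin n, HasCompactSupport (Qd n φ i) := by
    intro i
    have h1 : HasCompactSupport (Pd n φ i) := hφsupp.fderiv_apply ℝ (EuclideanSpace.single i 1)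
    exact h1.fderiv_apply ℝ (EuclideanSpace.single i 1)
  choose Mq hMq using fun i : Fin n =>
    (hQcont i).bounded_above_of_compact_support (hQsupp i)
  set M₂' : ℝ := ∑ i : Fin n, Mq i with hM₂_def
  have hM₂ : ∀ z, |∑ i, Qd n φ i z| ≤ M₂' := by
    intro z
    calc |∑ i, Qd n φ i z| ≤ ∑ i, |Qd n φ i z| := Finset.abs_sum_le_sum_abs _ _
      _ ≤ ∑ i : Fin n, Mq i := by
        apply Finset.sum_le_sum
        intro i _
        rw [← Real.norm_eq_abs]
        exact hMq i z
  have hM₁0 : 0 ≤ M₁' := le_trans (abs_nonneg _) (hM₁ 0)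
  have hM₂0 : 0 ≤ M₂' := le_trans (abs_nonneg _) (hM₂ 0)
  refine ⟨(m:ℝ) * (M₁' + M₂') + 1, by positivity, ?_⟩
  intro R t₀ hR ht₀
  -- monotone family of sets
  set S : ℕ → Set (EuclideanSpace ℝ (Fin n) × ℝ) :=
    fun k => {q | t₀ + 1/((k:ℝ)+1) ≤ q.2} with hS_def
  set Ut : Set (EuclideanSpace ℝ (Fin n) × ℝ) := {q | t₀ < q.2} with hUt_def
  set U : Set (EuclideanSpace ℝ (Fin n) × ℝ) := {q | 0 < q.2} with hU_def
  have hUtU : Ut ⊆ U := fun q hq => lt_trans ht₀ hq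
  have hUtmeas : MeasurableSet Ut := (isOpen_lt continuous_const continuous_snd).measurableSet
  have hSmeas : ∀ k, MeasurableSet (S k) :=
    fun k => measurableSet_le measurable_const measurable_snd
  have hSUt : ∀ k, S k ⊆ Ut := by
    intro k q hq
    have h1 : (0:ℝ) < 1/((k:ℝ)+1) := by positivity
    have h2 : t₀ + 1/((k:ℝ)+1) ≤ q.2 := hq
    show t₀ < q.2
    linarith
  have hSmono : Monotone S := by
    apply monotone_nat_of_le_succ
    intro k q hq
    have h2 : t₀ + 1/((k:ℝ)+1) ≤ q.2 := hq
    show t₀ + 1/((((k+1:ℕ)):ℝ)+1) ≤ q.2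
    push_cast
    have h3 : 1/((k:ℝ)+1+1) ≤ 1/((k:ℝ)+1) :=
      one_div_le_one_div_of_le (by positivity) (by linarith)
    linarith
  set F : EuclideanSpace ℝ (Fin n) × ℝ → ℝ≥0∞ := fun q =>
    ENNReal.ofReal (f q.1 q.2 * (φ (R⁻¹ • q.1) ^ β) * (ψ ((q.2 - t₀) / R ^ 2) ^ β)) with hF_def
  have hfaesm : AEStronglyMeasurable (fun q : EuclideanSpace ℝ (Fin n) × ℝ => f q.1 q.2)
      (volume.restrict Ut) :=
    hfloc.aestronglyMeasurable.mono_measure (Measure.restrict_mono hUtU le_rfl)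
  have hacont : Continuous (fun q : EuclideanSpace ℝ (Fin n) × ℝ => φ (R⁻¹ • q.1) ^ β) :=
    (hφsmooth.continuous.comp (continuous_fst.const_smul R⁻¹)).rpow_const
      (fun q => Or.inr hβ0.le)
  have hbcont : Continuous (fun q : EuclideanSpace ℝ (Fin n) × ℝ => ψ ((q.2 - t₀)/R^2) ^ β) :=
    (hψsmooth.continuous.comp ((continuous_snd.sub continuous_const).div_const _)).rpow_const
      (fun q => Or.inr hβ0.le)
  have hFaemeas : AEMeasurable F (volume.restrict Ut) := by
    apply ENNReal.measurable_ofReal.comp_aemeasurable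
    exact ((hfaesm.mul hacont.aestronglyMeasurable).mul hbcont.aestronglyMeasurable).aemeasurable
  have hcover : ∀ q ∈ Ut, ∃ k : ℕ, q ∈ S k := by
    intro q hq
    have h1 : (0:ℝ) < q.2 - t₀ := sub_pos.2 hq
    obtain ⟨k, hk⟩ := exists_nat_one_div_lt h1
    refine ⟨k, ?_⟩
    show t₀ + 1/((k:ℝ)+1) ≤ q.2
    have : 1/((k:ℝ)+1) < q.2 - t₀ := by exact_mod_cast hk
    linarith
  have hpointwise : ∀ q ∈ Ut, F q = ⨆ k : ℕ, Set.indicator (S k) F q := by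
    intro q hq
    obtain ⟨k₀, hk₀⟩ := hcover q hq
    apply le_antisymm
    · exact le_iSup_of_le k₀ (le_of_eq (Set.indicator_of_mem hk₀ F).symm)
    · apply iSup_le
      intro j
      by_cases hqj : q ∈ S j
      · rw [Set.indicator_of_mem hqj]
      · rw [Set.indicator_of_notMem hqj]; exact zero_le
  have hmono' : ∀ q, Monotone (fun k : ℕ => Set.indicator (S k) F q) := by
    intro q j l hjl
    by_cases hqj : q ∈ S j
    · simp only
      rw [Set.indicator_of_mem hqj, Set.indicator_of_mem (hSmono hjl hqj)]
    · simp only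
      rw [Set.indicator_of_notMem hqj]
      exact zero_le
  have key : ∀ k : ℕ, (∫⁻ q in S k, F q) ≤
      ENNReal.ofReal (((m:ℝ) * (M₁' + M₂') + 1) / R ^ 2) *
        ∫⁻ q in (Metric.ball (0 : EuclideanSpace ℝ (Fin n)) R ×ˢ Set.Ioo t₀ (t₀ + R ^ 2)) \
            (Metric.ball (0 : EuclideanSpace ℝ (Fin n)) (R / 2) ×ˢ
              Set.Ioo t₀ (t₀ + R ^ 2 / 2)),
          ENNReal.ofReal (v q.1 q.2 *
            ((φ (R⁻¹ • q.1) ^ β * ψ ((q.2 - t₀) / R ^ 2) ^ β) ^ ((β - 2) / β))) := by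
    intro k
    exact core_estimate n v f hvpos hfpos hvloc hfloc hineq φ ψ hφsmooth hψsmooth hφsupp
      hψsupp hφball hψball hφ0 hφ1 hψ0 hψ1 hφone hψone β hβ m hm2 hmβ hβm M₁' hM₁ M₂' hM₂
      R t₀ hR ht₀ k
  calc (∫⁻ q in Ut, F q)
      = ∫⁻ q in Ut, ⨆ k : ℕ, Set.indicator (S k) F q := by
        apply setLIntegral_congr_fun hUtmeas
        exact hpointwise
    _ = ⨆ k : ℕ, ∫⁻ q in Ut, Set.indicator (S k) F q := by
        apply lintegral_iSup' (fun k => (hFaemeas.indicator (hSmeas k)))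
        exact Filter.Eventually.of_forall hmono'
    _ ≤ ENNReal.ofReal (((m:ℝ) * (M₁' + M₂') + 1) / R ^ 2) *
        ∫⁻ q in (Metric.ball (0 : EuclideanSpace ℝ (Fin n)) R ×ˢ Set.Ioo t₀ (t₀ + R ^ 2)) \
            (Metric.ball (0 : EuclideanSpace ℝ (Fin n)) (R / 2) ×ˢ
              Set.Ioo t₀ (t₀ + R ^ 2 / 2)),
          ENNReal.ofReal (v q.1 q.2 *
            ((φ (R⁻¹ • q.1) ^ β * ψ ((q.2 - t₀) / R ^ 2) ^ β) ^ ((β - 2) / β))) := by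
        apply iSup_le
        intro k
        rw [lintegral_indicator (hSmeas k), Measure.restrict_restrict (hSmeas k),
          Set.inter_eq_self_of_subset_left (hSUt k)]
        exact key k
end

section
/- Let n ≥ 1. There exists a constant c > 0, depending only on n, such that for all x ∈ ℝ^n and all t, τ ∈ (0,∞) with |x|² < t and t/4 < τ < 3t/4, one has ∫_{|ξ|² < τ} Φ₁(x−ξ, t−τ) dξ ≥ c. -/
open MeasureTheory Real Set Metric
open scoped ENNReal

/-- The fractional heat kernel `Φ_α(x,t)`. -/
noncomputable def Phi (n : ℕ) (α : ℝ) (x : EuclideanSpace ℝ (Fin n)) (t : ℝ) : ℝ :=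
  if 0 < t then
    (t ^ (α - 1) / Real.Gamma α) * (4 * Real.pi * t) ^ (-(n : ℝ) / 2) *
      Real.exp (-‖x‖ ^ 2 / (4 * t))
  else 0

theorem kernel_lower_bound (n : ℕ) (hn : 1 ≤ n) :
    ∃ c : ℝ, 0 < c ∧ ∀ (x : EuclideanSpace ℝ (Fin n)) (t τ : ℝ),
      0 < t → 0 < τ → ‖x‖ ^ 2 < t → t / 4 < τ → τ < 3 * t / 4 →
      c ≤ ∫ ξ in {ξ : EuclideanSpace ℝ (Fin n) | ‖ξ‖ ^ 2 < τ}, Phi n 1 (x - ξ) (t - τ) := by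
  set V := (volume (ball (0 : EuclideanSpace ℝ (Fin n)) 1)).toReal with hV
  have hVpos : 0 < V := ENNReal.toReal_pos (measure_ball_pos _ _ one_pos).ne'
    measure_ball_lt_top.ne
  have hπ : (0:ℝ) < 4 * Real.pi := by positivity
  refine ⟨Real.exp (-(9/4)) * (4 * Real.pi) ^ (-(n:ℝ)/2) / 2 ^ n * V, by positivity,
    fun x t τ ht hτ hx h1 h2 => ?_⟩
  set s := t - τ with hsdef
  have hs : 0 < s := by simp only [hsdef]; linarith
  have hst : s ≤ t := by simp only [hsdef]; linarith
  have hs4 : t / 4 < s := by simp only [hsdef]; linarith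
  have hPhi : ∀ ξ : EuclideanSpace ℝ (Fin n), Phi n 1 (x - ξ) s
      = (4 * Real.pi * s) ^ (-(n:ℝ)/2) * Real.exp (-‖x - ξ‖ ^ 2 / (4 * s)) := by
    intro ξ
    simp [Phi, hs, Real.Gamma_one]
  set g : EuclideanSpace ℝ (Fin n) → ℝ :=
    fun ξ => (4 * Real.pi * s) ^ (-(n:ℝ)/2) * Real.exp (-‖x - ξ‖ ^ 2 / (4 * s)) with hg
  have hgc : Continuous g := by fun_prop
  have hgnn : ∀ ξ, 0 ≤ g ξ := fun ξ => by positivity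
  set S : Set (EuclideanSpace ℝ (Fin n)) := {ξ | ‖ξ‖ ^ 2 < τ} with hS
  have hSsub : S ⊆ closedBall 0 (Real.sqrt τ) := by
    intro ξ hξ
    simp only [hS, mem_setOf_eq] at hξ
    simp only [mem_closedBall, dist_zero_right]
    exact (Real.le_sqrt (norm_nonneg ξ) hτ.le).mpr hξ.le
  have hint : IntegrableOn g S := by
    refine (hgc.continuousOn.integrableOn_compact (isCompact_closedBall _ _)).mono_set hSsub
  set r : ℝ := Real.sqrt t / 2 with hr
  have hrpos : 0 < r := by positivity
  have hsqt : Real.sqrt t ^ 2 = t := Real.sq_sqrt ht.le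
  have hball : ball (0 : EuclideanSpace ℝ (Fin n)) r ⊆ S := by
    intro ξ hξ
    simp only [mem_ball, dist_zero_right] at hξ
    simp only [hS, mem_setOf_eq]
    have h3 : ‖ξ‖ ^ 2 < r ^ 2 := by
      have := norm_nonneg ξ
      nlinarith
    have : r ^ 2 = t / 4 := by rw [hr, div_pow, hsqt]; norm_num
    linarith
  -- rewrite integrand
  have hrw : ∫ ξ in S, Phi n 1 (x - ξ) (t - τ) = ∫ ξ in S, g ξ := by
    refine integral_congr_ae (ae_of_all _ fun ξ => ?_)
    show Phi n 1 (x - ξ) (t - τ) = g ξ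
    rw [← hsdef, hPhi]
  rw [hrw]
  have step1 : ∫ ξ in ball (0 : EuclideanSpace ℝ (Fin n)) r, g ξ ≤ ∫ ξ in S, g ξ :=
    setIntegral_mono_set hint (ae_of_all _ hgnn) (HasSubset.Subset.eventuallyLE hball)
  have hlb : ∀ ξ ∈ ball (0 : EuclideanSpace ℝ (Fin n)) r,
      (4 * Real.pi * t) ^ (-(n:ℝ)/2) * Real.exp (-(9/4)) ≤ g ξ := by
    intro ξ hξ
    simp only [mem_ball, dist_zero_right] at hξ
    have hxle : ‖x‖ ≤ Real.sqrt t := by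
      exact (Real.le_sqrt (norm_nonneg x) ht.le).mpr hx.le
    have hnx : ‖x - ξ‖ ^ 2 ≤ 9 * s := by
      have h4 : ‖x - ξ‖ ≤ Real.sqrt t + r := by
        calc ‖x - ξ‖ ≤ ‖x‖ + ‖ξ‖ := norm_sub_le _ _
          _ ≤ Real.sqrt t + r := by linarith [hξ.le]
      have h5 : Real.sqrt t + r = 3/2 * Real.sqrt t := by rw [hr]; ring
      have h6 : ‖x - ξ‖ ^ 2 ≤ (3/2 * Real.sqrt t) ^ 2 := by
        rw [← h5]; exact pow_le_pow_left₀ (norm_nonneg _) h4 2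
      have h7 : (3/2 * Real.sqrt t) ^ 2 = 9/4 * t := by rw [mul_pow, hsqt]; norm_num
      nlinarith
    have hA : (4 * Real.pi * t) ^ (-(n:ℝ)/2) ≤ (4 * Real.pi * s) ^ (-(n:ℝ)/2) := by
      apply Real.rpow_le_rpow_of_nonpos (by positivity)
        (by nlinarith [Real.pi_pos])
      have : (0:ℝ) ≤ (n:ℝ) := Nat.cast_nonneg n
      linarith
    have hB : Real.exp (-(9/4)) ≤ Real.exp (-‖x - ξ‖ ^ 2 / (4 * s)) := by
      apply Real.exp_le_exp.mpr
      rw [neg_div, neg_le_neg_iff, div_le_div_iff₀ (by positivity) (by norm_num : (0:ℝ) < 4)]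
      nlinarith
    exact mul_le_mul hA hB (Real.exp_pos _).le (by positivity)
  have step2 : (4 * Real.pi * t) ^ (-(n:ℝ)/2) * Real.exp (-(9/4)) *
      (volume (ball (0 : EuclideanSpace ℝ (Fin n)) r)).toReal
      ≤ ∫ ξ in ball (0 : EuclideanSpace ℝ (Fin n)) r, g ξ :=
    setIntegral_ge_of_const_le_real measurableSet_ball measure_ball_lt_top.ne hlb
      (hint.mono_set hball)
  -- volume computation
  haveI : Nontrivial (EuclideanSpace ℝ (Fin n)) :=
    Module.nontrivial_of_finrank_pos (R := ℝ)
      (by rw [finrank_euclideanSpace_fin]; omega)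
  have hvol : (volume (ball (0 : EuclideanSpace ℝ (Fin n)) r)).toReal = r ^ n * V := by
    rw [Measure.addHaar_ball _ _ hrpos.le, finrank_euclideanSpace_fin,
      ENNReal.toReal_mul, ENNReal.toReal_ofReal (by positivity)]
  -- rpow algebra
  have hmul : (4 * Real.pi * t) ^ (-(n:ℝ)/2) = (4 * Real.pi) ^ (-(n:ℝ)/2) * t ^ (-(n:ℝ)/2) :=
    Real.mul_rpow hπ.le ht.le
  have hsqpow : (Real.sqrt t) ^ n = t ^ ((n:ℝ)/2) := by
    rw [Real.sqrt_eq_rpow, ← Real.rpow_natCast (t ^ (1/2 : ℝ)) n, ← Real.rpow_mul ht.le]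
    ring_nf
  have hcancel : t ^ (-(n:ℝ)/2) * t ^ ((n:ℝ)/2) = 1 := by
    rw [← Real.rpow_add ht, neg_div, neg_add_cancel, Real.rpow_zero]
  have heq : (4 * Real.pi * t) ^ (-(n:ℝ)/2) * Real.exp (-(9/4)) * (r ^ n * V)
      = Real.exp (-(9/4)) * (4 * Real.pi) ^ (-(n:ℝ)/2) / 2 ^ n * V := by
    rw [hmul, hr, div_pow, hsqpow]
    linear_combination (Real.exp (-(9/4)) * (4 * Real.pi) ^ (-(n:ℝ)/2) / 2 ^ n * V) * hcancel
  calc Real.exp (-(9/4)) * (4 * Real.pi) ^ (-(n:ℝ)/2) / 2 ^ n * V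
      = (4 * Real.pi * t) ^ (-(n:ℝ)/2) * Real.exp (-(9/4)) * (r ^ n * V) := heq.symm
    _ = (4 * Real.pi * t) ^ (-(n:ℝ)/2) * Real.exp (-(9/4)) *
        (volume (ball (0 : EuclideanSpace ℝ (Fin n)) r)).toReal := by rw [hvol]
    _ ≤ ∫ ξ in ball (0 : EuclideanSpace ℝ (Fin n)) r, g ξ := step2
    _ ≤ ∫ ξ in S, g ξ := step1
end
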